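/- One-period robust dual representation without optimization over strategies: for any measurable X : Ω → ℝ, any h ∈ ℝ^d, and any measurable Y : Ω → [0,∞), one has sup over P ∈ 𝒫 of log E_P[exp(X + h·ΔS)] = sup over Q ∈ 𝒞 of ( E_Q[X + h·ΔS] − H(Q,𝒫) ), where 𝒞 := { Q probability measure : E_Q[|X| + |ΔS| + Y] + H(Q,𝒫) < ∞ }. -/

import Mathlib

open MeasureTheory ENNReal NNReal Real Filter Classical

noncomputable section

variable {Ω : Type*} [MeasurableSpace Ω]

/-- Relative entropy `H(Q,P) ∈ [0,∞]`, `+∞` if `Q` is not absolutely continuous w.r.t. `P`. -/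
def relEntropy (Q P : Measure Ω) : ℝ≥0∞ :=
  if Q ≪ P then
    (∫⁻ ω, ENNReal.ofReal ((Q.rnDeriv P ω).toReal * Real.log (Q.rnDeriv P ω).toReal + 1) ∂P) - 1
  else ⊤

/-- Robust relative entropy `H(Q,Pfam) = inf_{P ∈ Pfam} H(Q,P)`. -/
def robustEntropy (Q : Measure Ω) (Pfam : Set (Measure Ω)) : ℝ≥0∞ :=
  ⨅ P ∈ Pfam, relEntropy Q P

/-- Positive part of an extended real, valued in `ℝ≥0∞`. -/
def ePos (x : EReal) : ℝ≥0∞ := if x = ⊤ then ⊤ else ENNReal.ofReal x.toReal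

/-- Expectation `E_Q[X] = E_Q[X⁺] − E_Q[X⁻]` with value `−∞` when `E_Q[X⁻] = +∞`. -/
def eInt (Q : Measure Ω) (X : Ω → ℝ) : EReal :=
  if (∫⁻ ω, ENNReal.ofReal (-(X ω)) ∂Q) = ⊤ then ⊥
  else ((∫⁻ ω, ENNReal.ofReal (X ω) ∂Q : ℝ≥0∞) : EReal)
       - ((∫⁻ ω, ENNReal.ofReal (-(X ω)) ∂Q : ℝ≥0∞) : EReal)

/-- Expectation of an `EReal`-valued function, same convention. -/
def eIntE (Q : Measure Ω) (X : Ω → EReal) : EReal :=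
  if (∫⁻ ω, ePos (-(X ω)) ∂Q) = ⊤ then ⊥
  else ((∫⁻ ω, ePos (X ω) ∂Q : ℝ≥0∞) : EReal) - ((∫⁻ ω, ePos (-(X ω)) ∂Q : ℝ≥0∞) : EReal)

/-- `log E_P[exp X]` for real-valued `X`, valued in `EReal`. -/
def logMGF (P : Measure Ω) (X : Ω → ℝ) : EReal :=
  ENNReal.log (∫⁻ ω, ENNReal.ofReal (Real.exp (X ω)) ∂P)

/-- `log E_P[exp X]` for `EReal`-valued `X`. -/
def logMGFE (P : Measure Ω) (X : Ω → EReal) : EReal :=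
  ENNReal.log (∫⁻ ω, EReal.exp (X ω) ∂P)

/-- A set is `Pfam`-polar if it is null under every `P ∈ Pfam`. -/
def Polar (Pfam : Set (Measure Ω)) (N : Set Ω) : Prop := ∀ P ∈ Pfam, P N = 0

/-- No-arbitrage `NA(Pfam)` for a one-period market with increment `ΔS`. -/
def NA {d : ℕ} (Pfam : Set (Measure Ω)) (ΔS : Ω → Fin d → ℝ) : Prop :=
  ∀ h : Fin d → ℝ, Polar Pfam {ω : Ω | ∑ i, h i * ΔS ω i < 0} →
    Polar Pfam {ω : Ω | ∑ i, h i * ΔS ω i ≠ 0}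

/-- Convexity of a family of measures. -/
def ConvexFamily (Pfam : Set (Measure Ω)) : Prop :=
  ∀ P₁ ∈ Pfam, ∀ P₂ ∈ Pfam, ∀ t : ℝ≥0, t ≤ 1 →
    ((t : ℝ≥0∞) • P₁ + ((1 - t : ℝ≥0) : ℝ≥0∞) • P₂) ∈ Pfam

private lemma aux_mul_le {a b : ℝ} (ha : 0 ≤ a) : a * b ≤ a * Real.log a - a + Real.exp b := by
  rcases ha.eq_or_lt with rfl | ha'
  · simpa using (Real.exp_pos b).le
  · have h1 : (b - Real.log a) + 1 ≤ Real.exp (b - Real.log a) := Real.add_one_le_exp _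
    have h2 : Real.exp (b - Real.log a) = Real.exp b / a := by
      rw [Real.exp_sub, Real.exp_log ha']
    rw [h2] at h1
    have h3 : a * (Real.exp b / a) = Real.exp b := by field_simp
    nlinarith [mul_le_mul_of_nonneg_left h1 ha'.le]

private lemma aux_self_le {a : ℝ} (ha : 0 ≤ a) : a ≤ a * Real.log a + 1 := by
  have := aux_mul_le (b := 0) ha
  simp only [Real.exp_zero, mul_zero] at this
  linarith

private lemma aux_entropy_nonneg {a : ℝ} (ha : 0 ≤ a) : 0 ≤ a * Real.log a + 1 :=
  le_trans ha (aux_self_le ha)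

private lemma aux_pt {u g A B : ℝ} (hg : 0 ≤ g) (hA : 0 ≤ A) (hB : 0 ≤ B)
    (h : u + g + 1 ≤ A + B) :
    ENNReal.ofReal u + ENNReal.ofReal g + 1
      ≤ ENNReal.ofReal A + ENNReal.ofReal B + ENNReal.ofReal (-u) := by
  rcases le_total 0 u with hu | hu
  · have e1 : ENNReal.ofReal u + ENNReal.ofReal g + 1 = ENNReal.ofReal (u + g + 1) := by
      rw [ENNReal.ofReal_add (add_nonneg hu hg) zero_le_one, ENNReal.ofReal_add hu hg,
        ENNReal.ofReal_one]
    rw [e1]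
    refine le_trans (le_trans (ENNReal.ofReal_le_ofReal h) ?_) le_self_add
    rw [ENNReal.ofReal_add hA hB]
  · rw [ENNReal.ofReal_of_nonpos hu, zero_add]
    have h2 : g + 1 ≤ A + B + (-u) := by linarith
    have e1 : ENNReal.ofReal g + 1 = ENNReal.ofReal (g + 1) := by
      rw [ENNReal.ofReal_add hg zero_le_one, ENNReal.ofReal_one]
    rw [e1]
    refine le_trans (ENNReal.ofReal_le_ofReal h2) ?_
    exact le_trans (ENNReal.ofReal_add_le) (add_le_add_left ENNReal.ofReal_add_le _)

private lemma coe_e {x : ℝ≥0∞} (hx : x ≠ ⊤) : ((x : EReal)) = ((x.toReal : ℝ) : EReal) := by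
  rw [← EReal.toReal_coe_ennreal (x := x), EReal.coe_toReal]
  · exact fun h => hx (EReal.coe_ennreal_eq_top_iff.1 h)
  · intro h; exact absurd (h ▸ EReal.coe_ennreal_nonneg x) (by simp)

private lemma lint_pos_ne_top {Q : Measure Ω} {Z : Ω → ℝ} (hint : Integrable Z Q) :
    (∫⁻ ω, ENNReal.ofReal (Z ω) ∂Q) ≠ ⊤ := by
  refine ne_top_of_le_ne_top hint.2.ne (lintegral_mono fun ω => ?_)
  rw [← ofReal_norm, Real.norm_eq_abs]
  exact ENNReal.ofReal_le_ofReal (le_abs_self _)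

private lemma lint_neg_ne_top {Q : Measure Ω} {Z : Ω → ℝ} (hint : Integrable Z Q) :
    (∫⁻ ω, ENNReal.ofReal (-(Z ω)) ∂Q) ≠ ⊤ := by
  refine ne_top_of_le_ne_top hint.2.ne (lintegral_mono fun ω => ?_)
  rw [← ofReal_norm, Real.norm_eq_abs]
  exact ENNReal.ofReal_le_ofReal (neg_le_abs _)

private lemma gibbs (P Q : Measure Ω) [IsProbabilityMeasure P] [IsProbabilityMeasure Q]
    {Z : Ω → ℝ} (hZ : Measurable Z) (hint : Integrable Z Q)
    (hH : relEntropy Q P ≠ ⊤) :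
    ((∫ ω, Z ω ∂Q : ℝ) : EReal) - (relEntropy Q P : EReal) ≤ logMGF P Z := by
  have hac : Q ≪ P := by
    by_contra hc; exact hH (by rw [relEntropy, if_neg hc])
  set M := ∫⁻ ω, ENNReal.ofReal (Real.exp (Z ω)) ∂P with hM
  have hexpmeas : Measurable fun ω => ENNReal.ofReal (Real.exp (Z ω)) :=
    (Real.measurable_exp.comp hZ).ennreal_ofReal
  have hM0 : M ≠ 0 := by
    intro h0
    rw [hM, lintegral_eq_zero_iff hexpmeas] at h0
    have hfalse : ∀ᵐ ω ∂P, False := by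
      filter_upwards [h0] with ω hω
      simp only [Pi.zero_apply, ENNReal.ofReal_eq_zero] at hω
      exact absurd hω (not_le.2 (Real.exp_pos _))
    rw [ae_iff] at hfalse
    simp only [not_false_iff, Set.setOf_true] at hfalse
    exact one_ne_zero ((measure_univ (μ := P)).symm.trans hfalse)
  by_cases hMtop : M = ⊤
  · rw [logMGF, ← hM, hMtop, ENNReal.log_top]; exact le_top
  set m := M.toReal with hm
  have hm0 : 0 < m := ENNReal.toReal_pos hM0 hMtop
  have hlog : logMGF P Z = ((Real.log m : ℝ) : EReal) := by
    rw [logMGF, ← hM, ENNReal.log, if_neg hM0, if_neg hMtop]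
  set g := fun ω => (Q.rnDeriv P ω).toReal with hg
  have hgmeas : Measurable g := (Measure.measurable_rnDeriv Q P).ennreal_toReal
  have hg0 : ∀ ω, 0 ≤ g ω := fun ω => ENNReal.toReal_nonneg
  set W := fun ω => Z ω - Real.log m with hWdef
  have hWmeas : Measurable W := hZ.sub measurable_const
  have hWint : Integrable W Q := hint.sub (integrable_const _)
  have hpt : ∀ ω, ENNReal.ofReal (g ω * W ω) + ENNReal.ofReal (g ω) + 1
      ≤ ENNReal.ofReal (g ω * Real.log (g ω) + 1) + ENNReal.ofReal (Real.exp (Z ω) / m)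
        + ENNReal.ofReal (-(g ω * W ω)) := by
    intro ω
    refine aux_pt (hg0 ω) (aux_entropy_nonneg (hg0 ω)) (by positivity) ?_
    have h1 := aux_mul_le (a := g ω) (b := W ω) (hg0 ω)
    have h2 : Real.exp (W ω) = Real.exp (Z ω) / m := by
      simp only [hWdef, Real.exp_sub, Real.exp_log hm0]
    rw [h2] at h1; linarith
  have hint1 : ∫⁻ ω, ENNReal.ofReal (g ω) ∂P = 1 := by
    have hae : (fun ω => ENNReal.ofReal (g ω)) =ᵐ[P] Q.rnDeriv P := by
      filter_upwards [Measure.rnDeriv_lt_top Q P] with ω hω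
      simp only [hg, ENNReal.ofReal_toReal hω.ne]
    rw [lintegral_congr_ae hae, Measure.lintegral_rnDeriv hac, measure_univ]
  have hmulpos : ∫⁻ ω, ENNReal.ofReal (g ω * W ω) ∂P = ∫⁻ ω, ENNReal.ofReal (W ω) ∂Q := by
    have hae : (fun ω => ENNReal.ofReal (g ω * W ω))
        =ᵐ[P] fun ω => Q.rnDeriv P ω * ENNReal.ofReal (W ω) := by
      filter_upwards [Measure.rnDeriv_lt_top Q P] with ω hω
      rw [ENNReal.ofReal_mul (hg0 ω)]
      simp only [hg, ENNReal.ofReal_toReal hω.ne]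
    rw [lintegral_congr_ae hae,
      lintegral_rnDeriv_mul hac hWmeas.ennreal_ofReal.aemeasurable]
  have hmulneg : ∫⁻ ω, ENNReal.ofReal (-(g ω * W ω)) ∂P
      = ∫⁻ ω, ENNReal.ofReal (-(W ω)) ∂Q := by
    have hae : (fun ω => ENNReal.ofReal (-(g ω * W ω)))
        =ᵐ[P] fun ω => Q.rnDeriv P ω * ENNReal.ofReal (-(W ω)) := by
      filter_upwards [Measure.rnDeriv_lt_top Q P] with ω hω
      rw [neg_mul_eq_mul_neg, ENNReal.ofReal_mul (hg0 ω)]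
      simp only [hg, ENNReal.ofReal_toReal hω.ne]
    rw [lintegral_congr_ae hae,
      lintegral_rnDeriv_mul (f := fun ω => ENNReal.ofReal (-W ω)) hac hWmeas.neg.ennreal_ofReal.aemeasurable]
  have hB : ∫⁻ ω, ENNReal.ofReal (Real.exp (Z ω) / m) ∂P = 1 := by
    have e1 : ∀ ω, ENNReal.ofReal (Real.exp (Z ω) / m)
        = ENNReal.ofReal (Real.exp (Z ω)) * ENNReal.ofReal m⁻¹ := by
      intro ω
      rw [div_eq_mul_inv, ENNReal.ofReal_mul (Real.exp_nonneg _)]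
    calc ∫⁻ ω, ENNReal.ofReal (Real.exp (Z ω) / m) ∂P
        = ∫⁻ ω, ENNReal.ofReal (Real.exp (Z ω)) * ENNReal.ofReal m⁻¹ ∂P :=
          lintegral_congr fun ω => e1 ω
      _ = M * ENNReal.ofReal m⁻¹ := lintegral_mul_const _ hexpmeas
      _ = 1 := by
          rw [← ENNReal.ofReal_toReal hMtop, ← hm, ← ENNReal.ofReal_mul hm0.le,
            mul_inv_cancel₀ hm0.ne', ENNReal.ofReal_one]
  set I := ∫⁻ ω, ENNReal.ofReal (g ω * Real.log (g ω) + 1) ∂P with hI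
  have hrel : relEntropy Q P = I - 1 := by rw [relEntropy, if_pos hac]
  have hIge : 1 ≤ I := by
    rw [← hint1]
    exact lintegral_mono fun ω => ENNReal.ofReal_le_ofReal (aux_self_le (hg0 ω))
  have hKI : relEntropy Q P + 1 = I := by rw [hrel, tsub_add_cancel_of_le hIge]
  have hItop : I ≠ ⊤ := by
    intro htop
    rw [hrel, htop] at hH
    exact hH (by simp)
  have hKtop : relEntropy Q P ≠ ⊤ := hH
  -- integrate the pointwise inequality
  have hptI := lintegral_mono (μ := P) hpt
  have hgW : Measurable fun ω => ENNReal.ofReal (g ω * W ω) :=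
    (hgmeas.mul hWmeas).ennreal_ofReal
  have hLHS : ∫⁻ ω, (ENNReal.ofReal (g ω * W ω) + ENNReal.ofReal (g ω) + 1) ∂P
      = ∫⁻ ω, ENNReal.ofReal (W ω) ∂Q + 1 + 1 := by
    rw [lintegral_add_right _ measurable_const,
      lintegral_add_right _ hgmeas.ennreal_ofReal, hmulpos, hint1, lintegral_one, measure_univ]
  have hnegmeas : Measurable fun ω => ENNReal.ofReal (-(g ω * W ω)) :=
    ((hgmeas.mul hWmeas).neg).ennreal_ofReal
  have hexpdiv : Measurable fun ω => ENNReal.ofReal (Real.exp (Z ω) / m) :=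
    ((Real.measurable_exp.comp hZ).div_const m).ennreal_ofReal
  have hRHS : ∫⁻ ω, (ENNReal.ofReal (g ω * Real.log (g ω) + 1)
        + ENNReal.ofReal (Real.exp (Z ω) / m) + ENNReal.ofReal (-(g ω * W ω))) ∂P
      = I + 1 + ∫⁻ ω, ENNReal.ofReal (-(W ω)) ∂Q := by
    rw [lintegral_add_right _ hnegmeas, lintegral_add_right _ hexpdiv, hmulneg, hB, hI]
  rw [hLHS, hRHS] at hptI
  set a := ∫⁻ ω, ENNReal.ofReal (W ω) ∂Q with hadef
  set b := ∫⁻ ω, ENNReal.ofReal (-(W ω)) ∂Q with hbdef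
  have ha : a ≠ ⊤ := lint_pos_ne_top hWint
  have hb : b ≠ ⊤ := lint_neg_ne_top hWint
  have hab : a ≤ relEntropy Q P + b := by
    have h1 : a + 1 + 1 ≤ (relEntropy Q P + b) + 1 + 1 := by
      calc a + 1 + 1 ≤ I + 1 + b := hptI
        _ = (relEntropy Q P + b) + 1 + 1 := by rw [← hKI]; ring
    rwa [ENNReal.add_le_add_iff_right one_ne_top,
      ENNReal.add_le_add_iff_right one_ne_top] at h1
  have htoReal : a.toReal ≤ (relEntropy Q P).toReal + b.toReal := by
    have h2 := ENNReal.toReal_mono (ENNReal.add_ne_top.2 ⟨hKtop, hb⟩) hab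
    rwa [ENNReal.toReal_add hKtop hb] at h2
  have hWint' : ∫ ω, W ω ∂Q = a.toReal - b.toReal :=
    integral_eq_lintegral_pos_part_sub_lintegral_neg_part hWint
  have hWZ : ∫ ω, W ω ∂Q = (∫ ω, Z ω ∂Q) - Real.log m := by
    simp only [hWdef]
    rw [integral_sub hint (integrable_const _), integral_const, probReal_univ]
    simp
  have hfinal : (∫ ω, Z ω ∂Q) - (relEntropy Q P).toReal ≤ Real.log m := by
    have h3 : (∫ ω, Z ω ∂Q) - Real.log m ≤ (relEntropy Q P).toReal := by
      rw [← hWZ, hWint']; linarith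
    linarith
  rw [hlog, coe_e hKtop, ← EReal.coe_sub]
  exact EReal.coe_le_coe_iff.2 hfinal

private lemma eInt_eq_integral {Q : Measure Ω} {Z : Ω → ℝ} (hint : Integrable Z Q) :
    eInt Q Z = ((∫ ω, Z ω ∂Q : ℝ) : EReal) := by
  rw [eInt, if_neg (lint_neg_ne_top hint),
    integral_eq_lintegral_pos_part_sub_lintegral_neg_part hint,
    coe_e (lint_pos_ne_top hint), coe_e (lint_neg_ne_top hint), ← EReal.coe_sub]


private lemma tilt_exists (P : Measure Ω) [IsProbabilityMeasure P] {Z : Ω → ℝ}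
    (hZ : Measurable Z) {A : Set Ω} (hA : MeasurableSet A) {b : ℝ}
    (hb : ∀ ω ∈ A, |Z ω| ≤ b)
    (hc0 : (∫⁻ ω in A, ENNReal.ofReal (Real.exp (Z ω)) ∂P) ≠ 0) :
    ∃ Q : Measure Ω, IsProbabilityMeasure Q ∧
      (∀ (f : Ω → ℝ≥0∞) (r : ℝ≥0∞), (∀ ω ∈ A, f ω ≤ r) → (∫⁻ ω, f ω ∂Q) ≤ r) ∧
      relEntropy Q P ≠ ⊤ ∧
      ENNReal.log (∫⁻ ω in A, ENNReal.ofReal (Real.exp (Z ω)) ∂P)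
        = eInt Q Z - (relEntropy Q P : EReal) := by
  have hAne : A.Nonempty := by
    by_contra hne
    rw [Set.not_nonempty_iff_eq_empty] at hne
    exact hc0 (by rw [hne, Measure.restrict_empty, lintegral_zero_measure])
  have hb0 : 0 ≤ b := le_trans (abs_nonneg _) (hb _ hAne.choose_spec)
  set c := ∫⁻ ω in A, ENNReal.ofReal (Real.exp (Z ω)) ∂P with hcdef
  have hexpZA : ∀ ω ∈ A, Real.exp (Z ω) ≤ Real.exp b := fun ω hω =>
    Real.exp_le_exp.2 (le_trans (le_abs_self _) (hb ω hω))
  have hctop : c ≠ ⊤ := by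
    have hle : c ≤ ENNReal.ofReal (Real.exp b) * P A := by
      rw [← setLIntegral_const A]
      exact setLIntegral_mono measurable_const fun ω hω =>
        ENNReal.ofReal_le_ofReal (hexpZA ω hω)
    exact ne_top_of_le_ne_top (ENNReal.mul_ne_top ENNReal.ofReal_ne_top
      (measure_ne_top P A)) hle
  set m := c.toReal with hmdef
  have hm0 : 0 < m := ENNReal.toReal_pos hc0 hctop
  set d : Ω → ℝ := A.indicator (fun ω => Real.exp (Z ω) / m) with hddef
  have hd0 : ∀ ω, 0 ≤ d ω := fun ω =>
    Set.indicator_nonneg (fun ω _ => by positivity) ω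
  have hdmeas : Measurable d :=
    ((Real.measurable_exp.comp hZ).div_const m).indicator hA
  have hdbd : ∀ ω, d ω ≤ Real.exp b / m := by
    intro ω
    by_cases hω : ω ∈ A
    · rw [hddef, Set.indicator_of_mem hω]
      exact div_le_div_of_nonneg_right (hexpZA ω hω) hm0.le
    · rw [hddef, Set.indicator_of_notMem hω]; positivity
  set dd : Ω → ℝ≥0 := fun ω => (d ω).toNNReal with hdddef
  have hddmeas : Measurable dd := hdmeas.real_toNNReal
  set δ : Ω → ℝ≥0∞ := fun ω => (dd ω : ℝ≥0∞) with hδdef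
  have hδmeas : Measurable δ := hddmeas.coe_nnreal_ennreal
  have hδofReal : ∀ ω, δ ω = ENNReal.ofReal (d ω) := fun ω => rfl
  set Q := P.withDensity δ with hQdef
  have hδ1 : (∫⁻ ω, δ ω ∂P) = 1 := by
    have hind : ∀ ω, δ ω
        = A.indicator (fun ω => ENNReal.ofReal (Real.exp (Z ω) / m)) ω := by
      intro ω
      by_cases hω : ω ∈ A
      · rw [hδofReal, hddef, Set.indicator_of_mem hω, Set.indicator_of_mem hω]
      · rw [hδofReal, hddef, Set.indicator_of_notMem hω, Set.indicator_of_notMem hω,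
          ENNReal.ofReal_zero]
    calc (∫⁻ ω, δ ω ∂P)
        = ∫⁻ ω in A, ENNReal.ofReal (Real.exp (Z ω) / m) ∂P := by
          rw [lintegral_congr hind, lintegral_indicator hA _]
      _ = ∫⁻ ω in A, ENNReal.ofReal (Real.exp (Z ω)) * ENNReal.ofReal m⁻¹ ∂P := by
          refine lintegral_congr fun ω => ?_
          rw [div_eq_mul_inv, ENNReal.ofReal_mul (Real.exp_nonneg _)]
      _ = c * ENNReal.ofReal m⁻¹ :=
          lintegral_mul_const _ (Real.measurable_exp.comp hZ).ennreal_ofReal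
      _ = 1 := by
          rw [← ENNReal.ofReal_toReal hctop, ← hmdef, ← ENNReal.ofReal_mul hm0.le,
            mul_inv_cancel₀ hm0.ne', ENNReal.ofReal_one]
  have hQprob : IsProbabilityMeasure Q := by
    constructor
    rw [hQdef, withDensity_apply _ MeasurableSet.univ, Measure.restrict_univ, hδ1]
  have hbound : ∀ (f : Ω → ℝ≥0∞) (r : ℝ≥0∞), (∀ ω ∈ A, f ω ≤ r) → (∫⁻ ω, f ω ∂Q) ≤ r := by
    intro f r hf
    rw [hQdef, lintegral_withDensity_eq_lintegral_mul_non_measurable _ hδmeas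
      (ae_of_all _ fun ω => ENNReal.coe_lt_top)]
    have hpt : ∀ ω, (δ * f) ω ≤ δ ω * r := by
      intro ω
      by_cases hω : ω ∈ A
      · exact mul_le_mul_right (hf ω hω) _
      · have : δ ω = 0 := by
          rw [hδofReal, hddef, Set.indicator_of_notMem hω, ENNReal.ofReal_zero]
        simp [this]
    calc (∫⁻ ω, (δ * f) ω ∂P) ≤ ∫⁻ ω, δ ω * r ∂P := lintegral_mono hpt
      _ = 1 * r := by rw [lintegral_mul_const _ hδmeas, hδ1]
      _ = r := one_mul r
  have hacQ : Q ≪ P := withDensity_absolutelyContinuous P δ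
  have hQAc : Q Aᶜ = 0 := by
    rw [hQdef, withDensity_apply _ hA.compl]
    have : ∀ᵐ ω ∂P, ω ∈ Aᶜ → δ ω = 0 := ae_of_all _ fun ω hω => by
      rw [hδofReal, hddef, Set.indicator_of_notMem hω, ENNReal.ofReal_zero]
    rw [setLIntegral_congr_fun_ae hA.compl this, lintegral_zero]
  have hQae : ∀ᵐ ω ∂Q, ω ∈ A := by
    rw [ae_iff]
    exact hQAc
  haveI := hQprob
  have hintZ : Integrable Z Q := by
    refine Integrable.mono' (integrable_const b) hZ.aestronglyMeasurable ?_
    filter_upwards [hQae] with ω hω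
    rw [Real.norm_eq_abs]; exact hb ω hω
  set r := ∫ ω, Z ω ∂Q with hrdef
  set u : Ω → ℝ := A.indicator (fun ω => (Real.exp (Z ω) / m) * (Z ω - Real.log m)) with hudef
  set v : Ω → ℝ := fun ω => d ω * Real.log (d ω) + 1 with hvdef
  have hv0 : ∀ ω, 0 ≤ v ω := fun ω => aux_entropy_nonneg (hd0 ω)
  have hvu : ∀ ω, v ω = u ω + 1 := by
    intro ω
    by_cases hω : ω ∈ A
    · rw [hvdef, hudef]
      simp only [hddef, Set.indicator_of_mem hω]
      rw [Real.log_div (Real.exp_ne_zero _) hm0.ne', Real.log_exp]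
    · rw [hvdef, hudef]
      simp only [hddef, Set.indicator_of_notMem hω]
      simp
  have humeas : Measurable u :=
    (((Real.measurable_exp.comp hZ).div_const m).mul (hZ.sub measurable_const)).indicator hA
  have hubd : ∀ ω, |u ω| ≤ (Real.exp b / m) * (b + |Real.log m|) := by
    intro ω
    by_cases hω : ω ∈ A
    · rw [hudef, Set.indicator_of_mem hω, abs_mul]
      refine mul_le_mul ?_ ?_ (abs_nonneg _) (by positivity)
      · rw [abs_of_nonneg (by positivity)]
        exact div_le_div_of_nonneg_right (hexpZA ω hω) hm0.le
      · exact le_trans (abs_sub _ _) (add_le_add (hb ω hω) le_rfl)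
    · rw [hudef, Set.indicator_of_notMem hω, abs_zero]
      positivity
  have huint : Integrable u P := by
    refine Integrable.mono' (integrable_const ((Real.exp b / m) * (b + |Real.log m|)))
      humeas.aestronglyMeasurable (ae_of_all _ fun ω => ?_)
    rw [Real.norm_eq_abs]; exact hubd ω
  have hvint : Integrable v P := by
    have : v = fun ω => u ω + 1 := funext hvu
    rw [this]
    exact huint.add (integrable_const 1)
  have hdint : Integrable d P := by
    refine Integrable.mono' (integrable_const (Real.exp b / m))
      hdmeas.aestronglyMeasurable (ae_of_all _ fun ω => ?_)
    rw [Real.norm_eq_abs, abs_of_nonneg (hd0 ω)]; exact hdbd ω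
  -- relate integrals over Q and P
  have hsmul : ∀ (g : Ω → ℝ), (∫ ω, g ω ∂Q) = ∫ ω, d ω * g ω ∂P := by
    intro g
    rw [hQdef, hδdef, integral_withDensity_eq_integral_smul hddmeas g]
    refine integral_congr_ae (ae_of_all _ fun ω => ?_)
    have hdd : (dd ω : ℝ) = d ω := Real.coe_toNNReal _ (hd0 ω)
    show dd ω • g ω = d ω * g ω
    rw [NNReal.smul_def, smul_eq_mul, hdd]
  have hd1 : (∫ ω, d ω ∂P) = 1 := by
    have h1 := hsmul (fun _ => 1)
    simp only [mul_one] at h1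
    rw [← h1, integral_const, probReal_univ]
    simp
  have hueq : u = fun ω => d ω * (Z ω - Real.log m) := by
    funext ω
    by_cases hω : ω ∈ A
    · simp only [hudef, hddef, Set.indicator_of_mem hω]
    · simp only [hudef, hddef, Set.indicator_of_notMem hω, zero_mul]
  have hs : (∫ ω, u ω ∂P) = r - Real.log m := by
    have h2 := hsmul (fun ω => Z ω - Real.log m)
    rw [integral_sub hintZ (integrable_const _), integral_const, probReal_univ] at h2
    simp only [ENNReal.toReal_one, one_smul, smul_eq_mul] at h2
    calc (∫ ω, u ω ∂P) = ∫ ω, d ω * (Z ω - Real.log m) ∂P := by rw [hueq]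
      _ = r - Real.log m := by rw [← h2, hrdef]; ring
  have hvint' : (∫ ω, v ω ∂P) = (∫ ω, u ω ∂P) + 1 := by
    have hveq : v = fun ω => u ω + 1 := funext hvu
    rw [hveq, integral_add huint (integrable_const 1), integral_const, probReal_univ]
    simp
  have hs0 : 0 ≤ ∫ ω, u ω ∂P := by
    have hdv : (∫ ω, d ω ∂P) ≤ ∫ ω, v ω ∂P :=
      integral_mono hdint hvint fun ω => aux_self_le (hd0 ω)
    rw [hd1, hvint'] at hdv
    linarith
  set s := ∫ ω, u ω ∂P with hsdef
  have hrel : relEntropy Q P = ENNReal.ofReal s := by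
    rw [relEntropy, if_pos hacQ]
    have hae : (fun ω => ENNReal.ofReal
          ((Q.rnDeriv P ω).toReal * Real.log (Q.rnDeriv P ω).toReal + 1))
        =ᵐ[P] fun ω => ENNReal.ofReal (v ω) := by
      have hrn : Q.rnDeriv P =ᵐ[P] δ := by
        rw [hQdef]; exact Measure.rnDeriv_withDensity P hδmeas
      filter_upwards [hrn] with ω hω
      rw [hω, hδofReal ω, ENNReal.toReal_ofReal (hd0 ω)]
    rw [lintegral_congr_ae hae,
      ← ofReal_integral_eq_lintegral_ofReal hvint (ae_of_all _ hv0), hvint',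
      ENNReal.ofReal_add hs0 zero_le_one, ENNReal.ofReal_one,
      ENNReal.add_sub_cancel_right one_ne_top]
  refine ⟨Q, hQprob, hbound, by rw [hrel]; exact ENNReal.ofReal_ne_top, ?_⟩
  rw [eInt_eq_integral hintZ, hrel, ENNReal.log, if_neg hc0, if_neg hctop,
    coe_e ENNReal.ofReal_ne_top, ENNReal.toReal_ofReal hs0, ← EReal.coe_sub]
  have hfin : Real.log m = r - s := by rw [hs]; ring
  rw [hfin]

/-- One-period robust dual representation for a fixed strategy (Lemma 3.2):
`sup_{P∈𝒫} log E_P[exp(X + h·ΔS)] = sup_{Q∈𝒞} (E_Q[X + h·ΔS] − H(Q,𝒫))` where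
`𝒞 = {Q : E_Q[|X| + |ΔS| + Y] + H(Q,𝒫) < ∞}`. -/
theorem one_period_representation_fixed_strategy {d : ℕ}
    (Pfam : Set (Measure Ω)) (hne : Pfam.Nonempty)
    (hprob : ∀ P ∈ Pfam, IsProbabilityMeasure P)
    (ΔS : Ω → Fin d → ℝ) (hΔS : Measurable ΔS)
    (X : Ω → ℝ) (hX : Measurable X) (h : Fin d → ℝ)
    (Y : Ω → ℝ) (hY : Measurable Y) (hY0 : ∀ ω, 0 ≤ Y ω) :
    (⨆ P ∈ Pfam, logMGF P (fun ω => X ω + ∑ i, h i * ΔS ω i)) =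
      ⨆ (Q : Measure Ω) (_ : IsProbabilityMeasure Q ∧
          (∫⁻ ω, (ENNReal.ofReal |X ω| + ENNReal.ofReal (∑ i, |ΔS ω i|)
              + ENNReal.ofReal (Y ω)) ∂Q) ≠ ⊤ ∧
          robustEntropy Q Pfam ≠ ⊤),
        (eInt Q (fun ω => X ω + ∑ i, h i * ΔS ω i) - (robustEntropy Q Pfam : EReal)) := by
  classical
  set Z : Ω → ℝ := fun ω => X ω + ∑ i, h i * ΔS ω i with hZdef
  have hZmeas : Measurable Z := by
    refine hX.add (Finset.measurable_sum _ fun i _ => ?_)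
    exact measurable_const.mul ((measurable_pi_apply i).comp hΔS)
  set E : Ω → ℝ := fun ω => |X ω| + (∑ i, |ΔS ω i|) + Y ω with hEdef
  have hEmeas : Measurable E := by
    refine (hX.abs.add (Finset.measurable_sum _ fun i _ => ?_)).add hY
    exact ((measurable_pi_apply i).comp hΔS).abs
  have hE0 : ∀ ω, 0 ≤ E ω := fun ω =>
    add_nonneg (add_nonneg (abs_nonneg _) (Finset.sum_nonneg fun i _ => abs_nonneg _)) (hY0 ω)
  set C : ℝ := 1 + ∑ i, |h i| with hCdef
  have hC1 : 1 ≤ C := le_add_of_nonneg_right (Finset.sum_nonneg fun i _ => abs_nonneg _)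
  have hC0 : 0 < C := lt_of_lt_of_le one_pos hC1
  have hZE : ∀ ω, |Z ω| ≤ C * E ω := by
    intro ω
    have h1 : |Z ω| ≤ |X ω| + ∑ i, |h i| * |ΔS ω i| := by
      refine le_trans (abs_add_le _ _) (add_le_add le_rfl ?_)
      refine le_trans (Finset.abs_sum_le_sum_abs _ _) ?_
      exact le_of_eq (Finset.sum_congr rfl fun i _ => abs_mul _ _)
    have h3 : (∑ i, |h i| * |ΔS ω i|) ≤ C * ∑ i, |ΔS ω i| := by
      rw [Finset.mul_sum]
      refine Finset.sum_le_sum fun i _ => ?_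
      refine mul_le_mul_of_nonneg_right ?_ (abs_nonneg _)
      refine le_trans (Finset.single_le_sum (f := fun j => |h j|)
        (fun j _ => abs_nonneg _) (Finset.mem_univ i)) ?_
      rw [hCdef]; linarith
    have h4 : |X ω| ≤ C * |X ω| := le_mul_of_one_le_left (abs_nonneg _) hC1
    have h5 : 0 ≤ C * Y ω := mul_nonneg hC0.le (hY0 ω)
    have hEexp : C * E ω = C * |X ω| + C * (∑ i, |ΔS ω i|) + C * Y ω := by
      rw [hEdef]; ring
    rw [hEexp]
    linarith
  have henv : ∀ ω, ENNReal.ofReal |X ω| + ENNReal.ofReal (∑ i, |ΔS ω i|)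
      + ENNReal.ofReal (Y ω) = ENNReal.ofReal (E ω) := by
    intro ω
    rw [hEdef, ENNReal.ofReal_add (add_nonneg (abs_nonneg _)
        (Finset.sum_nonneg fun i _ => abs_nonneg _)) (hY0 ω),
      ENNReal.ofReal_add (abs_nonneg _) (Finset.sum_nonneg fun i _ => abs_nonneg _)]
  apply le_antisymm
  · -- sup over P ≤ sup over Q
    refine iSup₂_le fun P hP => ?_
    haveI := hprob P hP
    set A : ℕ → Set Ω := fun n => {ω | E ω ≤ (n : ℝ)} with hAdef
    have hAmeas : ∀ n, MeasurableSet (A n) := fun n => measurableSet_le hEmeas measurable_const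
    set c : ℕ → ℝ≥0∞ := fun n => ∫⁻ ω in A n, ENNReal.ofReal (Real.exp (Z ω)) ∂P with hcdef
    have hfmeas : Measurable fun ω => ENNReal.ofReal (Real.exp (Z ω)) :=
      (Real.measurable_exp.comp hZmeas).ennreal_ofReal
    have hMsup : (∫⁻ ω, ENNReal.ofReal (Real.exp (Z ω)) ∂P) = ⨆ n, c n := by
      have heq : ∀ n, c n = ∫⁻ ω, (A n).indicator
          (fun ω => ENNReal.ofReal (Real.exp (Z ω))) ω ∂P := fun n =>
        (lintegral_indicator (hAmeas n) _).symm
      have hmono : Monotone fun n => (A n).indicator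
          (fun ω => ENNReal.ofReal (Real.exp (Z ω))) := by
        intro n k hnk
        have hsub : A n ⊆ A k := by
          intro ω' hω'
          simp only [hAdef, Set.mem_setOf_eq] at hω' ⊢
          exact le_trans hω' (Nat.cast_le.2 hnk)
        exact fun ω => Set.indicator_le_indicator_of_subset hsub
          (fun a => (zero_le : (0 : ℝ≥0∞) ≤ _)) ω
      calc (∫⁻ ω, ENNReal.ofReal (Real.exp (Z ω)) ∂P)
          = ∫⁻ ω, ⨆ n, (A n).indicator (fun ω => ENNReal.ofReal (Real.exp (Z ω))) ω ∂P := by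
            refine lintegral_congr fun ω => ?_
            refine le_antisymm ?_ (iSup_le fun n => Set.indicator_le_self _ _ ω)
            refine le_iSup_of_le ⌈E ω⌉₊ ?_
            exact (Set.indicator_of_mem (show ω ∈ A ⌈E ω⌉₊ from Nat.le_ceil (E ω))
              (fun ω => ENNReal.ofReal (Real.exp (Z ω)))).symm.le
        _ = ⨆ n, ∫⁻ ω, (A n).indicator (fun ω => ENNReal.ofReal (Real.exp (Z ω))) ω ∂P :=
            lintegral_iSup (μ := P) (fun n => hfmeas.indicator (hAmeas n)) hmono
        _ = ⨆ n, c n := by exact (iSup_congr fun n => (heq n).symm)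
    have hlogsup : logMGF P Z = ⨆ n, ENNReal.log (c n) := by
      rw [logMGF, hMsup]
      calc ENNReal.log (⨆ n, c n) = ENNReal.logOrderIso (⨆ n, c n) := rfl
        _ = ⨆ n, ENNReal.logOrderIso (c n) := OrderIso.map_iSup _ _
        _ = ⨆ n, ENNReal.log (c n) := rfl
    rw [hlogsup]
    refine iSup_le fun n => ?_
    by_cases hc0 : c n = 0
    · rw [hc0, ENNReal.log_zero]
      exact bot_le
    · have hbZ : ∀ ω ∈ A n, |Z ω| ≤ C * (n : ℝ) := fun ω hω =>
        le_trans (hZE ω) (mul_le_mul_of_nonneg_left hω hC0.le)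
      obtain ⟨Q, hQprob, hQbound, hQrel, hQeq⟩ :=
        tilt_exists P hZmeas (hAmeas n) hbZ hc0
      have hQenv : (∫⁻ ω, (ENNReal.ofReal |X ω| + ENNReal.ofReal (∑ i, |ΔS ω i|)
          + ENNReal.ofReal (Y ω)) ∂Q) ≤ (n : ℝ≥0∞) := by
        refine hQbound _ (n : ℝ≥0∞) fun ω hω => ?_
        rw [henv ω, ← ENNReal.ofReal_natCast n]
        exact ENNReal.ofReal_le_ofReal hω
      have hrob_le : robustEntropy Q Pfam ≤ relEntropy Q P := iInf₂_le P hP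
      calc ENNReal.log (c n) = eInt Q Z - (relEntropy Q P : EReal) := hQeq
        _ ≤ eInt Q Z - (robustEntropy Q Pfam : EReal) :=
            EReal.sub_le_sub le_rfl (EReal.coe_ennreal_le_coe_ennreal_iff.2 hrob_le)
        _ ≤ _ := le_iSup₂_of_le Q ⟨hQprob,
            ne_top_of_le_ne_top (ENNReal.natCast_ne_top n) hQenv,
            ne_top_of_le_ne_top hQrel hrob_le⟩ le_rfl
  · -- sup over Q ≤ sup over P
    refine iSup₂_le fun Q hQ => ?_
    obtain ⟨hQprob, hQenv, hQrob⟩ := hQ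
    haveI := hQprob
    have henvmeas : Measurable fun ω => ENNReal.ofReal |X ω|
        + ENNReal.ofReal (∑ i, |ΔS ω i|) + ENNReal.ofReal (Y ω) := by
      refine (hX.abs.ennreal_ofReal.add ?_).add hY.ennreal_ofReal
      exact (Finset.measurable_sum _ fun i _ =>
        ((measurable_pi_apply i).comp hΔS).abs).ennreal_ofReal
    have hZint : Integrable Z Q := by
      refine ⟨hZmeas.aestronglyMeasurable, ?_⟩
      show (∫⁻ ω, (‖Z ω‖₊ : ℝ≥0∞) ∂Q) < ⊤
      have hptw : ∀ ω, (‖Z ω‖₊ : ℝ≥0∞) ≤ ENNReal.ofReal C * (ENNReal.ofReal |X ω|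
          + ENNReal.ofReal (∑ i, |ΔS ω i|) + ENNReal.ofReal (Y ω)) := by
        intro ω
        rw [← enorm_eq_nnnorm, ← ofReal_norm, Real.norm_eq_abs, henv ω,
          ← ENNReal.ofReal_mul hC0.le]
        exact ENNReal.ofReal_le_ofReal (hZE ω)
      calc (∫⁻ ω, (‖Z ω‖₊ : ℝ≥0∞) ∂Q)
          ≤ ∫⁻ ω, ENNReal.ofReal C * (ENNReal.ofReal |X ω|
            + ENNReal.ofReal (∑ i, |ΔS ω i|) + ENNReal.ofReal (Y ω)) ∂Q :=
            lintegral_mono hptw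
        _ = ENNReal.ofReal C * ∫⁻ ω, (ENNReal.ofReal |X ω|
            + ENNReal.ofReal (∑ i, |ΔS ω i|) + ENNReal.ofReal (Y ω)) ∂Q :=
            lintegral_const_mul _ henvmeas
        _ < ⊤ := ENNReal.mul_lt_top ENNReal.ofReal_lt_top (lt_top_iff_ne_top.2 hQenv)
    rw [eInt_eq_integral hZint]
    set r := ∫ ω, Z ω ∂Q with hrdef
    set K := robustEntropy Q Pfam with hKdef
    set S := ⨆ P ∈ Pfam, logMGF P Z with hSdef
    have key : ∀ x : ℝ, x < r - K.toReal → (x : EReal) ≤ S := by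
      intro x hx
      set ε := r - K.toReal - x with hεdef
      have hε : 0 < ε := by rw [hεdef]; linarith
      have hKlt : K < K + ENNReal.ofReal ε :=
        ENNReal.lt_add_right hQrob (by simpa [ENNReal.ofReal_eq_zero] using hε)
      have hexP : ∃ P, ∃ _ : P ∈ Pfam, relEntropy Q P < K + ENNReal.ofReal ε := by
        have h' : (⨅ P ∈ Pfam, relEntropy Q P) < K + ENNReal.ofReal ε := hKlt
        simpa only [iInf_lt_iff] using h'
      obtain ⟨P, hP, hPlt⟩ := hexP
      haveI := hprob P hP
      have hsum_ne : K + ENNReal.ofReal ε ≠ ⊤ :=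
        ENNReal.add_ne_top.2 ⟨hQrob, ENNReal.ofReal_ne_top⟩
      have hPtop : relEntropy Q P ≠ ⊤ := ne_top_of_lt (lt_of_lt_of_le hPlt (le_top.trans le_rfl))
      have hPle : (relEntropy Q P).toReal < K.toReal + ε := by
        have h2 := (ENNReal.toReal_lt_toReal hPtop hsum_ne).2 hPlt
        rwa [ENNReal.toReal_add hQrob ENNReal.ofReal_ne_top,
          ENNReal.toReal_ofReal hε.le] at h2
      have hgibbs := gibbs P Q hZmeas hZint hPtop
      have hx2 : (x : EReal) ≤ ((r - (relEntropy Q P).toReal : ℝ) : EReal) :=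
        EReal.coe_le_coe_iff.2 (by rw [hεdef] at hPle; linarith)
      refine le_trans hx2 (le_trans ?_ (le_iSup₂_of_le P hP le_rfl))
      rw [EReal.coe_sub, ← coe_e hPtop]
      exact hgibbs
    have hrK : (r : EReal) - (K : EReal) = ((r - K.toReal : ℝ) : EReal) := by
      rw [coe_e hQrob, ← EReal.coe_sub]
    rw [hrK]
    by_contra hcon
    push_neg at hcon
    obtain ⟨x, hSx, hxy⟩ := EReal.lt_iff_exists_real_btwn.1 hcon
    exact absurd (lt_of_le_of_lt (key x (EReal.coe_lt_coe_iff.1 hxy)) hSx) (lt_irrefl _)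

end
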